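/- Fix 0 < L < 1/2. For every t ∈ ℝ, the characteristic function of X_L satisfies E[exp(i t X_L)] = ∏_{m=0}^∞ e^{−i t a_{m,L}}/(1 − i·a_{m,L}·t), where the infinite product converges. -/

import Mathlib

open MeasureTheory ProbabilityTheory Filter Complex

noncomputable section

/-- The law of a standard complex Gaussian: real and imaginary parts are independent
centered real Gaussians of variance `1/2`. -/
def stdCGaussian : Measure ℂ :=
  Measure.map (fun p : ℝ × ℝ => (p.1 : ℂ) + p.2 * Complex.I)
    ((gaussianReal 0 (1/2)).prod (gaussianReal 0 (1/2)))

open scoped NNReal ENNReal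

lemma gauss_single (s : ℝ) :
    ∫ x : ℝ, Complex.exp (Complex.I * s * (x:ℂ)^2) ∂(gaussianReal 0 (1/2))
      = (Real.sqrt Real.pi)⁻¹ • (((Real.pi : ℂ)) / (1 - Complex.I * s)) ^ (1/2 : ℂ) := by
  rw [gaussianReal_of_var_ne_zero 0 (by norm_num : (1/2 : ℝ≥0) ≠ 0)]
  have hpdf : gaussianPDF 0 (1/2)
      = fun x => ((Real.toNNReal (gaussianPDFReal 0 (1/2) x) : ℝ≥0) : ℝ≥0∞) := by
    funext x; rw [gaussianPDF]; rfl
  rw [hpdf, integral_withDensity_eq_integral_smul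
    ((measurable_gaussianPDFReal 0 (1/2)).real_toNNReal) _]
  have hpdfval : ∀ x : ℝ, gaussianPDFReal 0 (1/2) x
      = (Real.sqrt Real.pi)⁻¹ * Real.exp (-x^2) := by
    intro x
    rw [gaussianPDFReal]
    push_cast
    norm_num
    have h2 : Real.sqrt 2 ≠ 0 := by positivity
    field_simp
  have hint : ∀ x : ℝ, (Real.toNNReal (gaussianPDFReal 0 (1/2) x))
        • Complex.exp (Complex.I * s * (x:ℂ)^2)
      = (Real.sqrt Real.pi)⁻¹ • Complex.exp (-(1 - Complex.I * s) * (x:ℂ)^2) := by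
    intro x
    rw [NNReal.smul_def, Real.coe_toNNReal _ (gaussianPDFReal_nonneg 0 (1/2) x), hpdfval x,
      Complex.real_smul, Complex.real_smul]
    push_cast
    rw [mul_assoc]
    congr 1
    rw [← Complex.exp_add]
    congr 1
    ring
  simp_rw [hint]
  rw [integral_smul]
  congr 1
  exact integral_gaussian_complex (by simp)

lemma stdC_charfun (s : ℝ) :
    ∫ z : ℂ, Complex.exp (Complex.I * s * (‖z‖ : ℂ)^2) ∂stdCGaussian
      = 1 / (1 - Complex.I * s) := by
  have hmeas : Measurable (fun p : ℝ × ℝ => (p.1 : ℂ) + p.2 * Complex.I) := by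
    fun_prop
  have hsm : AEStronglyMeasurable
      (fun z : ℂ => Complex.exp (Complex.I * s * (‖z‖ : ℂ)^2))
      (Measure.map (fun p : ℝ × ℝ => (p.1 : ℂ) + p.2 * Complex.I)
        ((gaussianReal 0 (1/2)).prod (gaussianReal 0 (1/2)))) := by
    apply Continuous.aestronglyMeasurable
    exact Complex.continuous_exp.comp
      (continuous_const.mul ((Complex.continuous_ofReal.comp continuous_norm).pow 2))
  rw [stdCGaussian, integral_map hmeas.aemeasurable hsm]
  have heq : ∀ p : ℝ × ℝ,
      Complex.exp (Complex.I * s * (‖(p.1 : ℂ) + p.2 * Complex.I‖ : ℂ)^2)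
      = Complex.exp (Complex.I * s * (p.1:ℂ)^2) * Complex.exp (Complex.I * s * (p.2:ℂ)^2) := by
    intro p
    rw [← Complex.exp_add]
    congr 1
    have habs : (‖(p.1 : ℂ) + p.2 * Complex.I‖)^2 = p.1^2 + p.2^2 := by
      rw [Complex.sq_norm, Complex.normSq_add_mul_I]
    have habs' : ((‖(p.1 : ℂ) + p.2 * Complex.I‖ : ℝ) : ℂ)^2
        = (p.1:ℂ)^2 + (p.2:ℂ)^2 := by
      rw [← Complex.ofReal_pow, habs]
      push_cast
      ring
    rw [habs']
    ring
  simp_rw [heq]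
  rw [integral_prod_mul (μ := gaussianReal 0 (1/2)) (ν := gaussianReal 0 (1/2))
    (f := fun x : ℝ => Complex.exp (Complex.I * s * (x:ℂ)^2))
    (g := fun y : ℝ => Complex.exp (Complex.I * s * (y:ℂ)^2))]
  rw [gauss_single]
  rw [smul_mul_smul_comm]
  have hpi : (0:ℝ) < Real.pi := Real.pi_pos
  have hb : (1 - Complex.I * (s:ℂ)) ≠ 0 := by
    intro h
    have := congrArg Complex.re h
    simp at this
  have hbase : ((Real.pi : ℂ)) / (1 - Complex.I * s) ≠ 0 := by
    apply div_ne_zero _ hb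
    simpa using ne_of_gt hpi
  rw [← Complex.cpow_add _ _ hbase]
  norm_num
  have h1 : ((Real.sqrt Real.pi : ℝ):ℂ) * ((Real.sqrt Real.pi : ℝ):ℂ) = (Real.pi:ℂ) := by
    norm_cast
    exact Real.mul_self_sqrt hpi.le
  rw [← mul_inv, h1]
  have hpic : ((Real.pi : ℝ):ℂ) ≠ 0 := by simpa using ne_of_gt hpi
  field_simp

lemma integral_mul_complex {Ω' : Type*} [MeasurableSpace Ω'] {μ : Measure Ω'}
    [IsProbabilityMeasure μ] {X Y : Ω' → ℂ} (h : IndepFun X Y μ)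
    (hX : Integrable X μ) (hY : Integrable Y μ)
    (hXY : Integrable (fun ω => X ω * Y ω) μ) :
    ∫ ω, X ω * Y ω ∂μ = (∫ ω, X ω ∂μ) * ∫ ω, Y ω ∂μ := by
  have habs : ∀ (z w : ℂ) (f g : ℂ → ℝ), (∀ u, |f u| ≤ ‖u‖) →
      (∀ u, |g u| ≤ ‖u‖) → ‖f z * g w‖ ≤ ‖z * w‖ := by
    intro z w f g hf hg
    rw [Real.norm_eq_abs, abs_mul, norm_mul]
    exact mul_le_mul (hf z) (hg w) (abs_nonneg _) (norm_nonneg _)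
  have hXYm : AEStronglyMeasurable (fun ω => X ω * Y ω) μ := hXY.1
  have hXre : Integrable (fun ω => (X ω).re) μ := hX.re
  have hXim : Integrable (fun ω => (X ω).im) μ := hX.im
  have hYre : Integrable (fun ω => (Y ω).re) μ := hY.re
  have hYim : Integrable (fun ω => (Y ω).im) μ := hY.im
  have hmXre : AEStronglyMeasurable (fun ω => (X ω).re) μ := hXre.1
  have hmXim : AEStronglyMeasurable (fun ω => (X ω).im) μ := hXim.1
  have hmYre : AEStronglyMeasurable (fun ω => (Y ω).re) μ := hYre.1
  have hmYim : AEStronglyMeasurable (fun ω => (Y ω).im) μ := hYim.1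
  have hrr : Integrable (fun ω => (X ω).re * (Y ω).re) μ :=
    hXY.mono (hmXre.mul hmYre) (ae_of_all _ fun ω =>
      habs _ _ _ _ (fun u => Complex.abs_re_le_norm u) (fun u => Complex.abs_re_le_norm u))
  have hii : Integrable (fun ω => (X ω).im * (Y ω).im) μ :=
    hXY.mono (hmXim.mul hmYim) (ae_of_all _ fun ω =>
      habs _ _ _ _ (fun u => Complex.abs_im_le_norm u) (fun u => Complex.abs_im_le_norm u))
  have hri : Integrable (fun ω => (X ω).re * (Y ω).im) μ :=
    hXY.mono (hmXre.mul hmYim) (ae_of_all _ fun ω =>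
      habs _ _ _ _ (fun u => Complex.abs_re_le_norm u) (fun u => Complex.abs_im_le_norm u))
  have hir : Integrable (fun ω => (X ω).im * (Y ω).re) μ :=
    hXY.mono (hmXim.mul hmYre) (ae_of_all _ fun ω =>
      habs _ _ _ _ (fun u => Complex.abs_im_le_norm u) (fun u => Complex.abs_re_le_norm u))
  have hRR : ∫ ω, (X ω).re * (Y ω).re ∂μ = (∫ ω, (X ω).re ∂μ) * ∫ ω, (Y ω).re ∂μ :=
    (h.comp Complex.measurable_re Complex.measurable_re).integral_fun_mul_eq_mul_integral hmXre hmYre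
  have hII : ∫ ω, (X ω).im * (Y ω).im ∂μ = (∫ ω, (X ω).im ∂μ) * ∫ ω, (Y ω).im ∂μ :=
    (h.comp Complex.measurable_im Complex.measurable_im).integral_fun_mul_eq_mul_integral hmXim hmYim
  have hRI : ∫ ω, (X ω).re * (Y ω).im ∂μ = (∫ ω, (X ω).re ∂μ) * ∫ ω, (Y ω).im ∂μ :=
    (h.comp Complex.measurable_re Complex.measurable_im).integral_fun_mul_eq_mul_integral hmXre hmYim
  have hIR : ∫ ω, (X ω).im * (Y ω).re ∂μ = (∫ ω, (X ω).im ∂μ) * ∫ ω, (Y ω).re ∂μ :=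
    (h.comp Complex.measurable_im Complex.measurable_re).integral_fun_mul_eq_mul_integral hmXim hmYre
  have hreInt : ∀ (f : Ω' → ℂ), Integrable f μ → (∫ ω, f ω ∂μ).re = ∫ ω, (f ω).re ∂μ := by
    intro f hf
    exact (integral_re hf).symm
  have himInt : ∀ (f : Ω' → ℂ), Integrable f μ → (∫ ω, f ω ∂μ).im = ∫ ω, (f ω).im ∂μ := by
    intro f hf
    exact (integral_im hf).symm
  apply Complex.ext
  · rw [hreInt _ hXY, Complex.mul_re, hreInt _ hX, hreInt _ hY, himInt _ hX, himInt _ hY]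
    simp_rw [Complex.mul_re]
    rw [integral_sub hrr hii, hRR, hII]
  · rw [himInt _ hXY, Complex.mul_im, hreInt _ hX, hreInt _ hY, himInt _ hX, himInt _ hY]
    simp_rw [Complex.mul_im]
    rw [integral_add hri hir, hRI, hIR]

lemma factor_integral {Ω' : Type*} [MeasureSpace Ω'] [IsProbabilityMeasure (ℙ : Measure Ω')]
    {ζ : Ω' → ℂ} (hm : Measurable ζ) (hd : Measure.map ζ ℙ = stdCGaussian) (c : ℝ) :
    ∫ ω, Complex.exp (Complex.I * c * (‖ζ ω‖ : ℂ)^2) ∂ℙ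
      = 1 / (1 - Complex.I * c) := by
  have hsm : AEStronglyMeasurable
      (fun z : ℂ => Complex.exp (Complex.I * c * (‖z‖ : ℂ)^2)) (Measure.map ζ ℙ) := by
    apply Continuous.aestronglyMeasurable
    exact Complex.continuous_exp.comp
      (continuous_const.mul ((Complex.continuous_ofReal.comp continuous_norm).pow 2))
  have hmap := integral_map (μ := ℙ) hm.aemeasurable hsm
  rw [hd] at hmap
  rw [← hmap, stdC_charfun c]

section ProdPart

variable {Ω : Type*} [MeasureSpace Ω] [IsProbabilityMeasure (ℙ : Measure Ω)]
    (ζ : ℕ → Ω → ℂ)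
    (a : ℕ → ℝ) (t : ℝ)

lemma prod_formula
    (hmeas : ∀ m, Measurable (ζ m))
    (hindep : iIndepFun ζ ℙ)
    (hdist : ∀ m, Measure.map (ζ m) ℙ = stdCGaussian)
    (N : ℕ) :
    ∫ ω, Complex.exp (Complex.I * t *
        ((∑ m ∈ Finset.range N, a m * ((‖ζ m ω‖)^2 - 1) : ℝ) : ℂ)) ∂ℙ
      = ∏ m ∈ Finset.range N,
          (Complex.exp (-Complex.I * t * a m) / (1 - Complex.I * a m * t)) := by
  set φ : ℕ → ℂ → ℂ := fun m z =>
    Complex.exp (Complex.I * t * ((a m * ((‖z‖)^2 - 1) : ℝ) : ℂ)) with hφ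
  have hφmeas : ∀ m, Measurable (φ m) := by
    intro m
    apply Complex.measurable_exp.comp
    apply Measurable.const_mul
    exact Complex.measurable_ofReal.comp
      ((((continuous_norm.measurable.pow_const 2).sub_const 1).const_mul (a m)))
  set g : ℕ → Ω → ℂ := fun m => φ m ∘ ζ m with hg
  have hg_meas : ∀ m, Measurable (g m) := fun m => (hφmeas m).comp (hmeas m)
  have hg_norm : ∀ m ω, ‖g m ω‖ = 1 := by
    intro m ω
    simp only [hg, hφ, Function.comp_apply]
    simp [Complex.norm_exp, ← Complex.ofReal_pow]
  have hgindep : iIndepFun g ℙ := hindep.comp φ hφmeas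
  have hprod_int : ∀ (s : Finset ℕ), Integrable (fun ω => ∏ m ∈ s, g m ω) ℙ := by
    intro s
    apply Integrable.mono' (integrable_const 1)
    · exact (Finset.measurable_prod s (fun m _ => hg_meas m)).aestronglyMeasurable
    · refine ae_of_all _ (fun ω => ?_)
      rw [norm_prod]
      rw [Finset.prod_congr rfl (fun m _ => hg_norm m ω)]
      simp
  -- expectation of each factor
  have hfac : ∀ m, ∫ ω, g m ω ∂ℙ
      = Complex.exp (-Complex.I * t * a m) / (1 - Complex.I * a m * t) := by
    intro m
    have hsplit : ∀ ω, g m ω = Complex.exp (-Complex.I * t * a m)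
        * Complex.exp (Complex.I * ((t * a m : ℝ) : ℂ) * (‖ζ m ω‖ : ℂ)^2) := by
      intro ω
      simp only [hg, hφ, Function.comp_apply]
      rw [← Complex.exp_add]
      congr 1
      push_cast
      ring
    simp_rw [hsplit]
    rw [integral_const_mul, factor_integral (hmeas m) (hdist m) (t * a m)]
    rw [mul_one_div]
    congr 2
    push_cast
    ring
  -- product of expectations
  have hmain : ∀ N, ∫ ω, ∏ m ∈ Finset.range N, g m ω ∂ℙ
      = ∏ m ∈ Finset.range N, ∫ ω, g m ω ∂ℙ := by
    intro N
    induction N with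
    | zero => simp
    | succ N ih =>
      have hIndep : IndepFun (∏ j ∈ Finset.range N, g j) (g N) ℙ :=
        hgindep.indepFun_prod_range_succ hg_meas N
      have hIndep' : IndepFun (fun ω => ∏ j ∈ Finset.range N, g j ω) (g N) ℙ := by
        have : (∏ j ∈ Finset.range N, g j) = fun ω => ∏ j ∈ Finset.range N, g j ω := by
          funext ω
          simp
        rwa [this] at hIndep
      have hPg : Integrable (fun ω => (∏ m ∈ Finset.range N, g m ω) * g N ω) ℙ := by
        have := hprod_int (Finset.range (N+1))
        simpa [Finset.prod_range_succ] using this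
      have hgNint : Integrable (g N) ℙ := by
        apply Integrable.mono' (integrable_const 1)
        · exact (hg_meas N).aestronglyMeasurable
        · exact ae_of_all _ (fun ω => le_of_eq (hg_norm N ω))
      simp_rw [Finset.prod_range_succ]
      rw [← ih]
      exact integral_mul_complex hIndep' (hprod_int _) hgNint hPg
  have hexp : ∀ ω, Complex.exp (Complex.I * t *
        ((∑ m ∈ Finset.range N, a m * ((‖ζ m ω‖)^2 - 1) : ℝ) : ℂ))
      = ∏ m ∈ Finset.range N, g m ω := by
    intro ω
    rw [Complex.ofReal_sum, Finset.mul_sum, Complex.exp_sum]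
    rfl
  simp_rw [hexp]
  rw [hmain N]
  exact Finset.prod_congr rfl (fun m _ => hfac m)

end ProdPart


-- recursion
lemma a_rec {L : ℝ} (hL0 : 0 < L) (a : ℕ → ℝ)
    (ha : ∀ m, a m = Real.Gamma (L + m) / (Real.Gamma L * m.factorial)) (m : ℕ) :
    a (m + 1) = a m * ((L + m) / (m + 1)) := by
  have h1 : Real.Gamma (L + (m + 1 : ℕ)) = (L + m) * Real.Gamma (L + m) := by
    have : (L + (m + 1 : ℕ) : ℝ) = (L + m) + 1 := by push_cast; ring
    rw [this, Real.Gamma_add_one (by positivity)]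
  have hG : Real.Gamma L ≠ 0 := ne_of_gt (Real.Gamma_pos_of_pos hL0)
  have hf : ((m.factorial : ℝ)) ≠ 0 := by positivity
  rw [ha, ha, h1, Nat.factorial_succ]
  push_cast
  field_simp

lemma a_pos {L : ℝ} (hL0 : 0 < L) (a : ℕ → ℝ)
    (ha : ∀ m, a m = Real.Gamma (L + m) / (Real.Gamma L * m.factorial)) (m : ℕ) :
    0 < a m := by
  rw [ha]
  have := Real.Gamma_pos_of_pos (show (0:ℝ) < L + m by positivity)
  have := Real.Gamma_pos_of_pos hL0
  positivity

lemma a_le {L : ℝ} (hL0 : 0 < L) (hL : L < 1/2) (a : ℕ → ℝ)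
    (ha : ∀ m, a m = Real.Gamma (L + m) / (Real.Gamma L * m.factorial)) (m : ℕ) :
    a m ≤ ((m : ℝ) + 1) ^ (L - 1) := by
  induction m with
  | zero =>
    simp [ha 0, Real.Gamma_pos_of_pos hL0, ne_of_gt (Real.Gamma_pos_of_pos hL0)]
  | succ m ih =>
    rw [a_rec hL0 a ha]
    set u : ℝ := 1 / ((m : ℝ) + 1) with hu
    have hm1 : (0:ℝ) < (m:ℝ) + 1 := by positivity
    have hu0 : 0 < u := by positivity
    have hu1 : u ≤ 1 := by
      rw [hu, div_le_one hm1]; norm_num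
    set p : ℝ := 1 - L with hp
    have hp0 : 0 ≤ p := by simp [hp]; linarith
    have hp1 : p ≤ 1 := by simp [hp]; linarith
    -- Bernoulli: (1+u)^p ≤ 1 + p*u
    have hbern : (1 + u) ^ p ≤ 1 + p * u :=
      rpow_one_add_le_one_add_mul_self (by linarith) hp0 hp1
    have hpu : 0 < 1 + p * u := by nlinarith
    have hkey : 1 - p * u ≤ (1 + p * u)⁻¹ := by
      rw [← one_div, le_div_iff₀ hpu]; nlinarith [sq_nonneg (p*u)]
    have hrpos : (0:ℝ) < (1 + u) ^ p := Real.rpow_pos_of_pos (by linarith) p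
    have hkey2 : (1 + p * u)⁻¹ ≤ ((1 + u) ^ p)⁻¹ := by
      exact inv_anti₀ hrpos hbern
    have hfrac : (L + m) / ((m:ℝ) + 1) = 1 - p * u := by
      rw [hp, hu]; field_simp; ring
    have hgoal2 : (L + m) / ((m:ℝ) + 1) ≤ (1 + u) ^ (L - 1) := by
      rw [hfrac]
      calc 1 - p * u ≤ (1 + p * u)⁻¹ := hkey
        _ ≤ ((1 + u) ^ p)⁻¹ := hkey2
        _ = (1 + u) ^ (L - 1) := by
            rw [← Real.rpow_neg (by linarith)]; congr 1; rw [hp]; ring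
    have h1u : (1 + u) = ((m : ℝ) + 2) / ((m : ℝ) + 1) := by
      rw [hu]; field_simp; ring
    have ha0 : 0 < a m := a_pos hL0 a ha m
    calc a m * ((L + m) / ((m:ℝ)+1)) ≤ ((m:ℝ)+1) ^ (L-1) * ((1 + u) ^ (L - 1)) := by
          apply mul_le_mul ih hgoal2 (by positivity) (by positivity)
      _ = (((m:ℝ)+1) * (1 + u)) ^ (L - 1) := by
          rw [← Real.mul_rpow (by positivity) (by positivity)]
      _ = ((m:ℝ)+2) ^ (L-1) := by
          rw [h1u]; congr 1; field_simp
      _ = (((m+1:ℕ) : ℝ) + 1) ^ (L-1) := by push_cast; ring_nf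

lemma sq_summable {L : ℝ} (hL0 : 0 < L) (hL : L < 1/2) :
    Summable (fun m : ℕ => ((m:ℝ)+1) ^ (2*L-2)) := by
  have h : Summable (fun n : ℕ => ((n:ℝ)) ^ (2*L-2)) :=
    Real.summable_nat_rpow.mpr (by linarith)
  have := (summable_nat_add_iff 1).mpr h
  exact this.congr (fun n => by push_cast; ring_nf)

lemma a_tendsto {L : ℝ} (hL0 : 0 < L) (hL : L < 1/2) (a : ℕ → ℝ)
    (ha : ∀ m, a m = Real.Gamma (L + m) / (Real.Gamma L * m.factorial)) :
    Filter.Tendsto a Filter.atTop (nhds 0) := by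
  have h1 : Filter.Tendsto (fun m : ℕ => ((m:ℝ)+1)) Filter.atTop Filter.atTop :=
    Filter.tendsto_atTop_add_const_right _ 1 tendsto_natCast_atTop_atTop
  have h2 : Filter.Tendsto (fun m : ℕ => ((m:ℝ)+1) ^ (L-1)) Filter.atTop (nhds 0) := by
    have h3 := (tendsto_rpow_neg_atTop (show (0:ℝ) < 1 - L by linarith)).comp h1
    refine h3.congr (fun m => ?_)
    simp only [Function.comp_apply]
    congr 1
    ring
  exact squeeze_zero (fun m => le_of_lt (a_pos hL0 a ha m)) (a_le hL0 hL a ha) h2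

lemma norm_log_factor {r : ℝ} (hr : |r| ≤ 1/2) :
    ‖Complex.log (Complex.exp (-(Complex.I * r)) / (1 - Complex.I * r))‖ ≤ (3/2) * r^2 := by
  have habs : ‖Complex.I * (r:ℂ)‖ = |r| := by
    simp [map_mul]
  have hden : (1:ℝ) ≤ ‖1 - Complex.I * r‖ := by
    have h1 : (1 - Complex.I * r).re = 1 := by simp
    have := Complex.abs_re_le_norm (1 - Complex.I * r)
    rw [h1] at this
    simpa using this
  have hdne : (1 - Complex.I * (r:ℂ)) ≠ 0 := by
    intro h
    rw [h] at hden
    simp at hden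
    linarith
  set q := Complex.exp (-(Complex.I * r)) / (1 - Complex.I * r) with hq
  have hq1 : q - 1 = (Complex.exp (-(Complex.I * r)) - 1 - (-(Complex.I * r))) / (1 - Complex.I * r) := by
    rw [eq_div_iff hdne, sub_mul, div_mul_cancel₀ _ hdne]; ring
  have hnum : ‖Complex.exp (-(Complex.I * r)) - 1 - (-(Complex.I * r))‖ ≤ r^2 := by
    have h := Complex.norm_exp_sub_one_sub_id_le (x := -(Complex.I * r))
      (by rw [norm_neg, habs]; linarith)
    rw [norm_neg, habs] at h
    calc ‖_‖ ≤ |r|^2 := h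
      _ = r^2 := _root_.sq_abs r
  have hqb : ‖q - 1‖ ≤ r^2 := by
    rw [hq1]
    rw [show ‖_ / (1 - Complex.I * (r:ℂ))‖ = ‖Complex.exp (-(Complex.I * r)) - 1 - (-(Complex.I * r))‖ / ‖1 - Complex.I * r‖ from norm_div _ _]
    calc _ ≤ ‖Complex.exp (-(Complex.I * r)) - 1 - (-(Complex.I * r))‖ / 1 :=
        div_le_div_of_nonneg_left ?_ ?_ hden |>.trans (le_refl _)
      _ ≤ r^2 := by rw [div_one]; exact hnum
    · positivity
    · norm_num
  have hqhalf : ‖q - 1‖ ≤ 1/2 := by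
    nlinarith [_root_.sq_abs r, sq_nonneg r, abs_nonneg r]
  have := Complex.norm_log_one_add_half_le_self hqhalf
  rw [add_sub_cancel] at this
  calc ‖Complex.log q‖ ≤ 3/2 * ‖q - 1‖ := this
    _ ≤ 3/2 * r^2 := by linarith

lemma factor_eq (r : ℝ) :
    Complex.exp (-Complex.I * r) / (1 - Complex.I * r)
      = Complex.exp (-(Complex.I * r)) / (1 - Complex.I * r) := by ring_nf

lemma multipliable_log {L : ℝ} (hL0 : 0 < L) (hL : L < 1/2) (a : ℕ → ℝ)
    (ha : ∀ m, a m = Real.Gamma (L + m) / (Real.Gamma L * m.factorial)) (t : ℝ) :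
    Summable (fun m : ℕ => Complex.log
      (Complex.exp (-Complex.I * t * a m) / (1 - Complex.I * a m * t))) ∧
    Multipliable (fun m : ℕ =>
      Complex.exp (-Complex.I * t * a m) / (1 - Complex.I * a m * t)) := by
  set f : ℕ → ℂ := fun m =>
    Complex.exp (-Complex.I * t * a m) / (1 - Complex.I * a m * t) with hf
  have hform : ∀ m, f m = Complex.exp (-(Complex.I * ((a m * t : ℝ) : ℂ)))
      / (1 - Complex.I * ((a m * t : ℝ) : ℂ)) := by
    intro m
    rw [hf]
    push_cast
    ring_nf
  -- nonvanishing
  have hden : ∀ r : ℝ, (1 - Complex.I * (r:ℂ)) ≠ 0 := by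
    intro r h
    have := congrArg Complex.re h
    simp at this
  have hfn : ∀ m, f m ≠ 0 := by
    intro m
    rw [hform m]
    exact div_ne_zero (Complex.exp_ne_zero _) (hden _)
  -- find tail index
  have htend : Filter.Tendsto (fun m => |a m * t|) Filter.atTop (nhds 0) := by
    have := ((a_tendsto hL0 hL a ha).mul_const t).abs
    simpa using this
  have hev : ∀ᶠ m in Filter.atTop, |a m * t| ≤ 1/2 :=
    htend.eventually (eventually_le_nhds (by norm_num))
  obtain ⟨N, hN⟩ := Filter.eventually_atTop.mp hev
  -- summability of logs
  have hsum : Summable (fun m : ℕ => ‖Complex.log (f m)‖) := by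
    apply (summable_nat_add_iff N).mp
    have hcomp : Summable (fun n : ℕ => (3/2) * t^2 * (((n + N : ℕ):ℝ)+1) ^ (2*L-2)) := by
      exact ((summable_nat_add_iff N).mpr (sq_summable hL0 hL)).mul_left _
    apply Summable.of_nonneg_of_le (fun n => norm_nonneg _) _ hcomp
    intro n
    set m := n + N with hm
    have hmN : N ≤ m := by omega
    have h1 : ‖Complex.log (f m)‖ ≤ (3/2) * (a m * t)^2 := by
      rw [hform m]
      exact norm_log_factor (hN m hmN)
    have h2 : (a m * t)^2 ≤ (((m:ℝ)+1) ^ (L-1))^2 * t^2 := by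
      rw [mul_pow]
      have hple := pow_le_pow_left₀ (le_of_lt (a_pos hL0 a ha m)) (a_le hL0 hL a ha m) 2
      nlinarith [sq_nonneg t]
    have h3 : (((m:ℝ)+1) ^ (L-1))^2 = ((m:ℝ)+1) ^ (2*L-2) := by
      rw [sq, ← Real.rpow_add (by positivity)]
      congr 1
      ring
    calc ‖Complex.log (f m)‖ ≤ (3/2) * (a m * t)^2 := h1
      _ ≤ (3/2) * ((((m:ℝ)+1) ^ (L-1))^2 * t^2) := by linarith
      _ = (3/2) * t^2 * (((m:ℝ)+1) ^ (2*L-2)) := by rw [h3]; ring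
  refine ⟨hsum.of_norm, ?_⟩
  exact Complex.multipliable_of_summable_log hsum.of_norm



/-- for fixed `0 < L < 1/2`, the characteristic function of `X_L` is
`E[e^{itX_L}] = ∏_m e^{−it a_{m,L}}/(1 − i a_{m,L} t)`, the infinite product converging. -/
theorem statement15
    {Ω : Type*} [MeasureSpace Ω] [IsProbabilityMeasure (ℙ : Measure Ω)]
    (ζ : ℕ → Ω → ℂ) (hmeas : ∀ m, Measurable (ζ m))
    (hindep : iIndepFun ζ ℙ)
    (hdist : ∀ m, Measure.map (ζ m) ℙ = stdCGaussian)
    (L : ℝ) (hL0 : 0 < L) (hL : L < 1/2)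
    (a : ℕ → ℝ) (ha : ∀ m, a m = Real.Gamma (L + m) / (Real.Gamma L * m.factorial))
    (X : Ω → ℝ)
    (hX : ∀ᵐ ω, Tendsto
      (fun N : ℕ => ∑ m ∈ Finset.range N, a m * (‖ζ m ω‖ ^ 2 - 1))
      atTop (nhds (X ω))) :
    ∀ t : ℝ,
      Multipliable (fun m : ℕ =>
        Complex.exp (-Complex.I * t * a m) / (1 - Complex.I * a m * t)) ∧
      (∫ ω, Complex.exp (Complex.I * t * X ω)) =
        ∏' m : ℕ, Complex.exp (-Complex.I * t * a m) / (1 - Complex.I * a m * t) := by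

  intro t
  obtain ⟨hslog, hmult⟩ := multipliable_log hL0 hL a ha t
  refine ⟨hmult, ?_⟩
  set S : ℕ → Ω → ℝ :=
    fun N ω => ∑ m ∈ Finset.range N, a m * ((‖ζ m ω‖)^2 - 1) with hS
  set F : ℕ → Ω → ℂ :=
    fun N ω => Complex.exp (Complex.I * t * ((S N ω : ℝ) : ℂ)) with hF
  have hSmeas : ∀ N, Measurable (S N) := by
    intro N
    apply Finset.measurable_sum
    intro m _
    exact (((continuous_norm.measurable.comp (hmeas m)).pow_const 2).sub_const 1).const_mul
      (a m)
  have hFmeas : ∀ N, AEStronglyMeasurable (F N) ℙ := fun N =>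
    (Complex.measurable_exp.comp
      ((Complex.measurable_ofReal.comp (hSmeas N)).const_mul _)).aestronglyMeasurable
  have hbound : ∀ N, ∀ᵐ ω ∂(ℙ : Measure Ω), ‖F N ω‖ ≤ (1:ℝ) := by
    intro N
    refine ae_of_all _ (fun ω => le_of_eq ?_)
    simp only [hF]
    rw [show Complex.I * (t:ℂ) * ((S N ω : ℝ) : ℂ)
        = Complex.I * ((t * S N ω : ℝ) : ℂ) by push_cast; ring]
    simp [Complex.norm_exp]
  have hcont : Continuous (fun x : ℝ => Complex.exp (Complex.I * t * (x:ℂ))) :=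
    Complex.continuous_exp.comp (continuous_const.mul Complex.continuous_ofReal)
  have hlim : ∀ᵐ ω ∂(ℙ : Measure Ω), Tendsto (fun N => F N ω) atTop
      (nhds (Complex.exp (Complex.I * t * (X ω : ℂ)))) := by
    filter_upwards [hX] with ω hω
    exact ((hcont.tendsto (X ω)).comp hω)
  have hdct := tendsto_integral_of_dominated_convergence (fun _ => (1:ℝ))
    hFmeas (integrable_const 1) hbound hlim
  have hseq : ∀ N, ∫ ω, F N ω ∂(ℙ : Measure Ω)
      = ∏ m ∈ Finset.range N,
          (Complex.exp (-Complex.I * t * a m) / (1 - Complex.I * a m * t)) := by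
    intro N
    exact prod_formula ζ a t hmeas hindep hdist N
  have hdct2 : Tendsto (fun N => ∏ m ∈ Finset.range N,
      (Complex.exp (-Complex.I * t * a m) / (1 - Complex.I * a m * t))) atTop
      (nhds (∫ ω, Complex.exp (Complex.I * t * (X ω : ℂ)))) := by
    have := hdct
    simp_rw [hseq] at this
    exact this
  exact tendsto_nhds_unique hdct2 (HasProd.tendsto_prod_nat hmult.hasProd)
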